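/- Let (Aₙ)ₙ∈ℤ be a sequence of invertible linear maps on ℝ^M with uniform hyperbolic splitting: projections Pₙ^s, Pₙ^u with Pₙ^s + Pₙ^u = Id, Aₙ Pₙ^s = P_{n+1}^s Aₙ, Aₙ Pₙ^u = P_{n+1}^u Aₙ, and uniform bounds ‖Aₙ₊ₖ₋₁⋯Aₙ Pₙ^s‖ ≤ Cλᵏ, ‖(Aₙ₊ₖ₋₁⋯Aₙ)⁻¹ P_{n+k}^u‖ ≤ Cλᵏ for all k ≥ 0, with 0 < λ < 1. Given a bounded sequence of covectors (ωₙ), the adjoint shadowing equation νₙ = Aₙ* ν_{n+1} + ωₙ has a unique bounded solution, given explicitly by νₙ = Σ_{k≥0} (A_{n+k-1}⋯Aₙ)* (P_{n+k}^s)* ω_{n+k} − Σ_{k≤−1} (A_{n+k}⋯A_{n−1})^{−*} (P_{n+k}^u)* ω_{n+k}. -/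

import Mathlib

open scoped BigOperators

/-- Forward cocycle product: `cocycleProd A n k = A (n+k-1) ∘ ⋯ ∘ A n`. -/
noncomputable def cocycleProd {M : ℕ} (A : ℤ → (EuclideanSpace ℝ (Fin M) ≃L[ℝ] EuclideanSpace ℝ (Fin M))) :
    ℤ → ℕ → (EuclideanSpace ℝ (Fin M) →L[ℝ] EuclideanSpace ℝ (Fin M))
  | _, 0 => ContinuousLinearMap.id ℝ _
  | n, (k+1) => ((A (n + k)) : EuclideanSpace ℝ (Fin M) →L[ℝ] EuclideanSpace ℝ (Fin M)).comp
      (cocycleProd A n k)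

/-- Inverse cocycle product: `cocycleProdInv A n k = (A (n+k-1) ∘ ⋯ ∘ A n)⁻¹`. -/
noncomputable def cocycleProdInv {M : ℕ} (A : ℤ → (EuclideanSpace ℝ (Fin M) ≃L[ℝ] EuclideanSpace ℝ (Fin M))) :
    ℤ → ℕ → (EuclideanSpace ℝ (Fin M) →L[ℝ] EuclideanSpace ℝ (Fin M))
  | _, 0 => ContinuousLinearMap.id ℝ _
  | n, (k+1) => (cocycleProdInv A n k).comp
      (((A (n + k)).symm : EuclideanSpace ℝ (Fin M) →L[ℝ] EuclideanSpace ℝ (Fin M)))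

/-- Abbreviation for the ambient space. -/
abbrev Esp (M : ℕ) := EuclideanSpace ℝ (Fin M)

section Aux

variable {M : ℕ} (A : ℤ → (Esp M ≃L[ℝ] Esp M))

lemma cocycleProd_zero (n : ℤ) : cocycleProd A n 0 = ContinuousLinearMap.id ℝ (Esp M) := rfl

lemma cocycleProd_succ (n : ℤ) (k : ℕ) :
    cocycleProd A n (k+1)
      = ((A (n + k)) : Esp M →L[ℝ] Esp M).comp (cocycleProd A n k) := rfl

lemma cocycleProdInv_zero (n : ℤ) : cocycleProdInv A n 0 = ContinuousLinearMap.id ℝ (Esp M) := rfl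

lemma cocycleProdInv_succ (n : ℤ) (k : ℕ) :
    cocycleProdInv A n (k+1)
      = (cocycleProdInv A n k).comp (((A (n + k)).symm : Esp M →L[ℝ] Esp M)) := rfl

lemma coe_comp_symm (j : ℤ) :
    ((A j : Esp M →L[ℝ] Esp M)).comp (((A j).symm : Esp M →L[ℝ] Esp M))
      = ContinuousLinearMap.id ℝ (Esp M) := by
  ext x; simp

lemma symm_comp_coe (j : ℤ) :
    (((A j).symm : Esp M →L[ℝ] Esp M)).comp ((A j : Esp M →L[ℝ] Esp M))
      = ContinuousLinearMap.id ℝ (Esp M) := by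
  ext x; simp

lemma cocycleProd_succ_left (n : ℤ) (k : ℕ) :
    cocycleProd A n (k+1) = (cocycleProd A (n+1) k).comp ((A n : Esp M →L[ℝ] Esp M)) := by
  induction k with
  | zero => simp [cocycleProd_succ, cocycleProd_zero]
  | succ k ih =>
    have hc : n + ((k+1 : ℕ) : ℤ) = (n+1) + (k : ℤ) := by push_cast; ring
    rw [cocycleProd_succ A n (k+1), ih, cocycleProd_succ A (n+1) k, hc,
      ContinuousLinearMap.comp_assoc]

lemma cocycleProd_comp_inv (n : ℤ) (k : ℕ) :
    (cocycleProd A n k).comp (cocycleProdInv A n k) = ContinuousLinearMap.id ℝ (Esp M) := by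
  induction k with
  | zero => simp [cocycleProd_zero, cocycleProdInv_zero]
  | succ k ih =>
    rw [cocycleProd_succ, cocycleProdInv_succ, ContinuousLinearMap.comp_assoc,
      ← ContinuousLinearMap.comp_assoc (cocycleProd A n k), ih,
      ContinuousLinearMap.id_comp, coe_comp_symm]

lemma cocycleProdInv_comp_A (n : ℤ) (k : ℕ) :
    (cocycleProdInv A n (k+1)).comp ((A (n + k) : Esp M →L[ℝ] Esp M))
      = cocycleProdInv A n k := by
  rw [cocycleProdInv_succ, ContinuousLinearMap.comp_assoc, symm_comp_coe,
    ContinuousLinearMap.comp_id]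

variable (Ps Pu : ℤ → (Esp M →L[ℝ] Esp M))

lemma Ps_comp_cocycleProd
    (hints : ∀ n, ((A n : Esp M →L[ℝ] _).comp (Ps n)) = (Ps (n+1)).comp (A n : Esp M →L[ℝ] _))
    (n : ℤ) (k : ℕ) :
    (Ps (n + k)).comp (cocycleProd A n k) = (cocycleProd A n k).comp (Ps n) := by
  induction k with
  | zero => simp [cocycleProd_zero]
  | succ k ih =>
    have hc : n + ((k+1 : ℕ) : ℤ) = (n + (k : ℤ)) + 1 := by push_cast; ring
    rw [cocycleProd_succ, hc, ← ContinuousLinearMap.comp_assoc, ← hints (n + (k:ℤ)),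
      ContinuousLinearMap.comp_assoc, ih, ← ContinuousLinearMap.comp_assoc]

lemma Pu_comp_symm
    (hintu : ∀ n, ((A n : Esp M →L[ℝ] _).comp (Pu n)) = (Pu (n+1)).comp (A n : Esp M →L[ℝ] _))
    (j : ℤ) :
    (Pu j).comp (((A j).symm : Esp M →L[ℝ] Esp M))
      = (((A j).symm : Esp M →L[ℝ] Esp M)).comp (Pu (j+1)) := by
  refine ContinuousLinearMap.ext fun x => ?_
  have h := congrArg (fun (T : Esp M →L[ℝ] Esp M) => T ((A j).symm x)) (hintu j)
  simp only [ContinuousLinearMap.coe_comp', Function.comp_apply,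
    ContinuousLinearEquiv.coe_coe, ContinuousLinearEquiv.apply_symm_apply] at h
  simp only [ContinuousLinearMap.coe_comp', Function.comp_apply,
    ContinuousLinearEquiv.coe_coe]
  exact ((ContinuousLinearEquiv.eq_symm_apply (A j)).mpr h)

lemma Pu_comp_cocycleProdInv
    (hintu : ∀ n, ((A n : Esp M →L[ℝ] _).comp (Pu n)) = (Pu (n+1)).comp (A n : Esp M →L[ℝ] _))
    (n : ℤ) (k : ℕ) :
    (Pu n).comp (cocycleProdInv A n k) = (cocycleProdInv A n k).comp (Pu (n + k)) := by
  induction k with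
  | zero => simp [cocycleProdInv_zero]
  | succ k ih =>
    have hc : n + ((k+1 : ℕ) : ℤ) = (n + (k : ℤ)) + 1 := by push_cast; ring
    rw [cocycleProdInv_succ, hc, ← ContinuousLinearMap.comp_assoc, ih,
      ContinuousLinearMap.comp_assoc, Pu_comp_symm A Pu hintu (n + (k:ℤ)),
      ← ContinuousLinearMap.comp_assoc]

end Aux

theorem stmt_2 (M : ℕ)
    (A : ℤ → (EuclideanSpace ℝ (Fin M) ≃L[ℝ] EuclideanSpace ℝ (Fin M)))
    (Ps Pu : ℤ → (EuclideanSpace ℝ (Fin M) →L[ℝ] EuclideanSpace ℝ (Fin M)))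
    (hsum : ∀ n, Ps n + Pu n = ContinuousLinearMap.id ℝ _)
    (hints : ∀ n, ((A n : EuclideanSpace ℝ (Fin M) →L[ℝ] _).comp (Ps n))
      = (Ps (n+1)).comp (A n : EuclideanSpace ℝ (Fin M) →L[ℝ] _))
    (hintu : ∀ n, ((A n : EuclideanSpace ℝ (Fin M) →L[ℝ] _).comp (Pu n))
      = (Pu (n+1)).comp (A n : EuclideanSpace ℝ (Fin M) →L[ℝ] _))
    (C lam : ℝ) (hC : 0 < C) (hlam0 : 0 < lam) (hlam1 : lam < 1)
    (hstab : ∀ (n : ℤ) (k : ℕ), ‖(cocycleProd A n k).comp (Ps n)‖ ≤ C * lam ^ k)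
    (hunst : ∀ (n : ℤ) (k : ℕ), ‖(cocycleProdInv A n k).comp (Pu (n + k))‖ ≤ C * lam ^ k)
    (ω : ℤ → (EuclideanSpace ℝ (Fin M) →L[ℝ] ℝ))
    (hω : ∃ Kω, ∀ n, ‖ω n‖ ≤ Kω) :
    ∃ ν : ℤ → (EuclideanSpace ℝ (Fin M) →L[ℝ] ℝ),
      ((∃ K, ∀ n, ‖ν n‖ ≤ K) ∧
        (∀ n, ν n = (ν (n+1)).comp (A n : EuclideanSpace ℝ (Fin M) →L[ℝ] _) + ω n)) ∧
      (∀ ν' : ℤ → (EuclideanSpace ℝ (Fin M) →L[ℝ] ℝ),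
        ((∃ K, ∀ n, ‖ν' n‖ ≤ K) ∧
          (∀ n, ν' n = (ν' (n+1)).comp (A n : EuclideanSpace ℝ (Fin M) →L[ℝ] _) + ω n))
        → ν' = ν) ∧
      (∀ n, ν n =
        (∑' k : ℕ, ((ω (n + k)).comp (Ps (n + k))).comp (cocycleProd A n k))
        - (∑' k : ℕ, ((ω (n - (k+1))).comp (Pu (n - (k+1)))).comp
            (cocycleProdInv A (n - (k+1)) (k+1)))) := by
  classical
  obtain ⟨Kω, hKω⟩ := hω
  have hKω0 : 0 ≤ Kω := le_trans (norm_nonneg _) (hKω 0)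
  -- the two families of terms
  set fS : ℤ → ℕ → (EuclideanSpace ℝ (Fin M) →L[ℝ] ℝ) :=
    fun n k => ((ω (n + k)).comp (Ps (n + k))).comp (cocycleProd A n k) with hfS
  set fU : ℤ → ℕ → (EuclideanSpace ℝ (Fin M) →L[ℝ] ℝ) :=
    fun n k => ((ω (n - (k+1))).comp (Pu (n - (k+1)))).comp
      (cocycleProdInv A (n - (k+1)) (k+1)) with hfU
  -- norm bounds
  have hSb : ∀ (n : ℤ) (k : ℕ), ‖fS n k‖ ≤ Kω * (C * lam ^ k) := by
    intro n k
    have h1 : fS n k = (ω (n + k)).comp ((cocycleProd A n k).comp (Ps n)) := by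
      rw [hfS]
      simp only
      rw [ContinuousLinearMap.comp_assoc, Ps_comp_cocycleProd A Ps hints]
    rw [h1]
    calc ‖(ω (n + k)).comp ((cocycleProd A n k).comp (Ps n))‖
        ≤ ‖ω (n + k)‖ * ‖(cocycleProd A n k).comp (Ps n)‖ :=
          ContinuousLinearMap.opNorm_comp_le _ _
      _ ≤ Kω * (C * lam ^ k) :=
          mul_le_mul (hKω _) (hstab n k) (norm_nonneg _) hKω0
  have hUb : ∀ (n : ℤ) (k : ℕ), ‖fU n k‖ ≤ Kω * (C * lam ^ (k+1)) := by
    intro n k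
    have hc : (n - ((k:ℤ)+1)) + ((k+1 : ℕ) : ℤ) = n := by push_cast; ring
    have h1 : fU n k
        = (ω (n - (k+1))).comp ((cocycleProdInv A (n - (k+1)) (k+1)).comp (Pu n)) := by
      rw [hfU]
      simp only
      rw [ContinuousLinearMap.comp_assoc,
        Pu_comp_cocycleProdInv A Pu hintu (n - ((k:ℤ)+1)) (k+1), hc]
    rw [h1]
    have h2 := hunst (n - ((k:ℤ)+1)) (k+1)
    rw [hc] at h2
    calc ‖(ω (n - (k+1))).comp ((cocycleProdInv A (n - (k+1)) (k+1)).comp (Pu n))‖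
        ≤ ‖ω (n - (k+1))‖ * ‖(cocycleProdInv A (n - (k+1)) (k+1)).comp (Pu n)‖ :=
          ContinuousLinearMap.opNorm_comp_le _ _
      _ ≤ Kω * (C * lam ^ (k+1)) :=
          mul_le_mul (hKω _) h2 (norm_nonneg _) hKω0
  -- summability
  have hgeo : Summable (fun k : ℕ => Kω * (C * lam ^ k)) :=
    ((summable_geometric_of_lt_one hlam0.le hlam1).mul_left C).mul_left Kω
  have hgeo' : Summable (fun k : ℕ => Kω * (C * lam ^ (k+1))) := by
    refine (hgeo.mul_right lam).congr (fun k => ?_)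
    ring
  have hSsum : ∀ n, Summable (fun k => fS n k) := fun n =>
    Summable.of_norm_bounded hgeo (hSb n)
  have hUsum : ∀ n, Summable (fun k => fU n k) := fun n =>
    Summable.of_norm_bounded hgeo' (hUb n)
  -- the candidate solution
  set ν : ℤ → (EuclideanSpace ℝ (Fin M) →L[ℝ] ℝ) :=
    fun n => (∑' k, fS n k) - (∑' k, fU n k) with hν
  -- precomposition operator
  set φ : ℤ → ((EuclideanSpace ℝ (Fin M) →L[ℝ] ℝ) →L[ℝ] (EuclideanSpace ℝ (Fin M) →L[ℝ] ℝ)) :=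
    fun n => (ContinuousLinearMap.compL ℝ (EuclideanSpace ℝ (Fin M))
      (EuclideanSpace ℝ (Fin M)) ℝ).flip ((A n : EuclideanSpace ℝ (Fin M) →L[ℝ] _)) with hφ
  have hφ_apply : ∀ n (g : EuclideanSpace ℝ (Fin M) →L[ℝ] ℝ),
      φ n g = g.comp ((A n : EuclideanSpace ℝ (Fin M) →L[ℝ] _)) := by
    intro n g; rfl
  -- recurrence for the stable part
  have fact1 : ∀ n, (∑' k, fS n k)
      = (ω n).comp (Ps n)
        + (∑' k, fS (n+1) k).comp ((A n : EuclideanSpace ℝ (Fin M) →L[ℝ] _)) := by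
    intro n
    rw [(hSsum n).tsum_eq_zero_add]
    have h0 : fS n 0 = (ω n).comp (Ps n) := by
      rw [hfS]; simp [cocycleProd_zero]
    have hterm : ∀ k : ℕ, fS n (k+1) = φ n (fS (n+1) k) := by
      intro k
      rw [hφ_apply, hfS]
      simp only
      have hc : n + ((k+1 : ℕ) : ℤ) = (n + 1) + (k : ℤ) := by push_cast; ring
      rw [cocycleProd_succ_left, hc, ← ContinuousLinearMap.comp_assoc]
    rw [h0, tsum_congr hterm, ← ContinuousLinearMap.map_tsum (φ n) (hSsum (n+1)), hφ_apply]
  -- recurrence for the unstable part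
  have fact2 : ∀ n, (∑' k, fU (n+1) k).comp ((A n : EuclideanSpace ℝ (Fin M) →L[ℝ] _))
      = (ω n).comp (Pu n) + ∑' k, fU n k := by
    intro n
    set gU : ℕ → (EuclideanSpace ℝ (Fin M) →L[ℝ] ℝ) :=
      fun k => ((ω (n - k)).comp (Pu (n - k))).comp (cocycleProdInv A (n - k) k) with hgU
    have hterm : ∀ k : ℕ, φ n (fU (n+1) k) = gU k := by
      intro k
      rw [hφ_apply, hfU, hgU]
      simp only
      have hm : (n + 1) - ((k:ℤ)+1) = n - (k:ℤ) := by ring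
      have hn : (n - (k:ℤ)) + (k:ℤ) = n := by ring
      rw [hm, ContinuousLinearMap.comp_assoc]
      congr 1
      have h5 := cocycleProdInv_comp_A A (n - (k:ℤ)) k
      rw [hn] at h5
      exact h5
    have hgUsum : Summable gU := ((hUsum (n+1)).mapL (φ n)).congr hterm
    have hg0 : gU 0 = (ω n).comp (Pu n) := by
      rw [hgU]; simp [cocycleProdInv_zero]
    have hgsucc : ∀ k : ℕ, gU (k+1) = fU n k := by
      intro k
      rw [hgU, hfU]
      simp only
      have hc : n - ((k+1 : ℕ) : ℤ) = n - ((k:ℤ)+1) := by push_cast; ring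
      rw [hc]
    calc (∑' k, fU (n+1) k).comp ((A n : EuclideanSpace ℝ (Fin M) →L[ℝ] _))
        = φ n (∑' k, fU (n+1) k) := (hφ_apply n _).symm
      _ = ∑' k, φ n (fU (n+1) k) := ContinuousLinearMap.map_tsum (φ n) (hUsum (n+1))
      _ = ∑' k, gU k := tsum_congr hterm
      _ = gU 0 + ∑' k, gU (k+1) := hgUsum.tsum_eq_zero_add
      _ = (ω n).comp (Pu n) + ∑' k, fU n k := by rw [hg0, tsum_congr hgsucc]
  -- ν satisfies the adjoint equation
  have hsplit : ∀ n : ℤ, (ω n).comp (Ps n) + (ω n).comp (Pu n) = ω n := by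
    intro n
    rw [← ContinuousLinearMap.comp_add, hsum n, ContinuousLinearMap.comp_id]
  have hrec : ∀ n, ν n = (ν (n+1)).comp ((A n : EuclideanSpace ℝ (Fin M) →L[ℝ] _)) + ω n := by
    intro n
    rw [hν]
    simp only
    rw [ContinuousLinearMap.sub_comp, fact1 n, fact2 n]
    nth_rewrite 3 [← hsplit n]
    abel
  -- boundedness of ν
  have hnormS : ∀ n, ‖∑' k, fS n k‖ ≤ ∑' k : ℕ, Kω * (C * lam ^ k) := by
    intro n
    have h1 : Summable (fun k => ‖fS n k‖) :=
      Summable.of_nonneg_of_le (fun k => norm_nonneg _) (hSb n) hgeo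
    exact le_trans (norm_tsum_le_tsum_norm h1) (Summable.tsum_le_tsum (hSb n) h1 hgeo)
  have hnormU : ∀ n, ‖∑' k, fU n k‖ ≤ ∑' k : ℕ, Kω * (C * lam ^ (k+1)) := by
    intro n
    have h1 : Summable (fun k => ‖fU n k‖) :=
      Summable.of_nonneg_of_le (fun k => norm_nonneg _) (hUb n) hgeo'
    exact le_trans (norm_tsum_le_tsum_norm h1) (Summable.tsum_le_tsum (hUb n) h1 hgeo')
  set K : ℝ := (∑' k : ℕ, Kω * (C * lam ^ k)) + (∑' k : ℕ, Kω * (C * lam ^ (k+1))) with hK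
  have hbound : ∀ n, ‖ν n‖ ≤ K := by
    intro n
    rw [hν]
    exact le_trans (norm_sub_le _ _) (add_le_add (hnormS n) (hnormU n))
  have hform : ∀ n, ν n =
      (∑' k : ℕ, ((ω (n + k)).comp (Ps (n + k))).comp (cocycleProd A n k))
      - (∑' k : ℕ, ((ω (n - (k+1))).comp (Pu (n - (k+1)))).comp
          (cocycleProdInv A (n - (k+1)) (k+1))) := by
    intro n
    rw [hν]
  refine ⟨ν, ⟨⟨K, hbound⟩, hrec⟩, ?_, hform⟩
  -- uniqueness
  rintro ν' ⟨⟨K', hK'⟩, hrec'⟩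
  set d : ℤ → (EuclideanSpace ℝ (Fin M) →L[ℝ] ℝ) := fun n => ν' n - ν n with hd
  have hKd : ∀ n, ‖d n‖ ≤ K' + K := by
    intro n
    exact le_trans (norm_sub_le _ _) (add_le_add (hK' n) (hbound n))
  have hKd0 : 0 ≤ K' + K := le_trans (norm_nonneg _) (hKd 0)
  have hdeq : ∀ n, d n = ν' n - ν n := fun n => rfl
  have hdrec : ∀ n, d n = (d (n+1)).comp ((A n : EuclideanSpace ℝ (Fin M) →L[ℝ] _)) := by
    intro n
    rw [hdeq, hdeq, hrec' n, hrec n, ContinuousLinearMap.sub_comp]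
    exact add_sub_add_right_eq_sub _ _ _
  have hiter : ∀ (m : ℤ) (k : ℕ), d m = (d (m + k)).comp (cocycleProd A m k) := by
    intro m k
    induction k with
    | zero => simp [cocycleProd_zero]
    | succ k ih =>
      have hc : m + ((k+1 : ℕ) : ℤ) = (m + (k : ℤ)) + 1 := by push_cast; ring
      rw [hc, cocycleProd_succ, ← ContinuousLinearMap.comp_assoc, ← hdrec (m + (k:ℤ)), ih]
  have htend : Filter.Tendsto (fun k : ℕ => (K' + K) * (C * lam ^ k))
      Filter.atTop (nhds 0) := by
    have h6 := ((tendsto_pow_atTop_nhds_zero_of_lt_one hlam0.le hlam1).const_mul C).const_mul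
      (K' + K)
    simpa using h6
  have hzs : ∀ n, (d n).comp (Ps n) = 0 := by
    intro n
    have hb : ∀ k : ℕ, ‖(d n).comp (Ps n)‖ ≤ (K' + K) * (C * lam ^ k) := by
      intro k
      rw [hiter n k, ContinuousLinearMap.comp_assoc]
      calc ‖(d (n + k)).comp ((cocycleProd A n k).comp (Ps n))‖
          ≤ ‖d (n + k)‖ * ‖(cocycleProd A n k).comp (Ps n)‖ :=
            ContinuousLinearMap.opNorm_comp_le _ _
        _ ≤ (K' + K) * (C * lam ^ k) :=
            mul_le_mul (hKd _) (hstab n k) (norm_nonneg _) hKd0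
    exact norm_le_zero_iff.mp (ge_of_tendsto' htend hb)
  have hzu : ∀ n, (d n).comp (Pu n) = 0 := by
    intro n
    have hb : ∀ k : ℕ, ‖(d n).comp (Pu n)‖ ≤ (K' + K) * (C * lam ^ k) := by
      intro k
      have hn : (n - (k:ℤ)) + (k:ℤ) = n := by ring
      have h1 : d (n - (k:ℤ)) = (d n).comp (cocycleProd A (n - (k:ℤ)) k) := by
        have h7 := hiter (n - (k:ℤ)) k
        rw [hn] at h7
        exact h7
      have h2 : (d n).comp (Pu n)
          = (d (n - (k:ℤ))).comp ((cocycleProdInv A (n - (k:ℤ)) k).comp (Pu n)) := by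
        rw [h1, ContinuousLinearMap.comp_assoc]
        congr 1
        rw [← ContinuousLinearMap.comp_assoc, cocycleProd_comp_inv,
          ContinuousLinearMap.id_comp]
      have h3 := hunst (n - (k:ℤ)) k
      rw [hn] at h3
      rw [h2]
      calc ‖(d (n - (k:ℤ))).comp ((cocycleProdInv A (n - (k:ℤ)) k).comp (Pu n))‖
          ≤ ‖d (n - (k:ℤ))‖ * ‖(cocycleProdInv A (n - (k:ℤ)) k).comp (Pu n)‖ :=
            ContinuousLinearMap.opNorm_comp_le _ _
        _ ≤ (K' + K) * (C * lam ^ k) :=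
            mul_le_mul (hKd _) h3 (norm_nonneg _) hKd0
    exact norm_le_zero_iff.mp (ge_of_tendsto' htend hb)
  funext n
  have hdn : d n = 0 := by
    have h1 : d n = (d n).comp (Ps n) + (d n).comp (Pu n) := by
      rw [← ContinuousLinearMap.comp_add, hsum n, ContinuousLinearMap.comp_id]
    rw [h1, hzs n, hzu n, add_zero]
  have h8 : ν' n - ν n = 0 := hdn
  exact sub_eq_zero.mp h8
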